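/- For every complex number w with Re w ≤ 0 and w in the strip where η := Log(1 + e^w) has |Im η| ≤ π/2, the quantity (1/e)·|η/(e^η − 1)|·|(e^{η+1} − 1)/(η + 1)| is at most (e² + e + 1)/(e² + e). Equivalently, writing η = x + iy with |y| ≤ π/2, one has (1/e)·g(x+1,y)/g(x,y) ≤ ((e²+e+1)/(e²+e))², where g(x,y) = (cosh x − cos y)/(x² + y²). -/

import Mathlib

open Complex Real

-- ===== auxiliary analytic bounds =====

lemma exp_near' {t : ℝ} (h : |t| ≤ 1) :
    |Real.exp t - (1 + t + t^2/2 + t^3/6)| ≤ t^4 * (5/96) := by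
  have h4 := Real.exp_bound h (by norm_num : 0 < 4)
  have hs : ∑ i ∈ Finset.range 4, t ^ i / (Nat.factorial i) = 1 + t + t^2/2 + t^3/6 := by
    simp [Finset.sum_range_succ, Nat.factorial]
  rw [hs] at h4
  calc |Real.exp t - (1 + t + t^2/2 + t^3/6)|
      ≤ |t|^4 * ((Nat.succ 4) / (Nat.factorial 4 * 4)) := h4
    _ = t^4 * (5/96) := by
        have h6 : |t|^4 = t^4 := by
          rw [show (4:ℕ) = 2*2 by rfl, pow_mul, _root_.sq_abs, ← pow_mul]
        rw [h6]
        norm_num [Nat.factorial]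

lemma exp_near_neg' {t : ℝ} (h : |t| ≤ 1) :
    |Real.exp (-t) - (1 - t + t^2/2 - t^3/6)| ≤ t^4 * (5/96) := by
  have h2 : |(-t)| ≤ 1 := by rwa [abs_neg]
  have h3 := exp_near' h2
  have e1 : 1 + (-t) + (-t)^2/2 + (-t)^3/6 = 1 - t + t^2/2 - t^3/6 := by ring
  have e2 : (-t)^4 = t^4 := by ring
  rwa [e1, e2] at h3

lemma quad_le_cosh (t : ℝ) : 1 + t^2/2 ≤ Real.cosh t := by
  have h2 : Real.cosh (2 * (t/2)) = Real.cosh (t/2)^2 + Real.sinh (t/2)^2 := Real.cosh_two_mul _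
  have h3 : Real.cosh (t/2)^2 = Real.sinh (t/2)^2 + 1 := Real.cosh_sq _
  have h4 : (t/2)^2 ≤ Real.sinh (t/2)^2 := by
    rcases le_total 0 t with ht | ht
    · have h5 : t/2 ≤ Real.sinh (t/2) := by
        rcases eq_or_lt_of_le ht with h | ht
        · simp [← h]
        · exact (Real.self_lt_sinh_iff.2 (by linarith)).le
      nlinarith
    · have h5 : Real.sinh (t/2) ≤ t/2 := by
        rcases eq_or_lt_of_le ht with h | ht
        · simp [h]
        · exact (Real.sinh_lt_self_iff.2 (by linarith)).le
      nlinarith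
  have h6 : (2:ℝ) * (t/2) = t := by ring
  rw [h6] at h2
  nlinarith

-- ===== regional polynomial lemmas =====

lemma regionR1 (x s c u U e : ℝ) (hx : 1 ≤ x) (hs0 : 0 ≤ s) (hs : s ≤ 2.468)
    (hc0 : 0 ≤ c) (hc1 : c ≤ 1) (hc2 : c ≤ 1 - 0.2016*s) (hu : 1 + x^2/2 ≤ u)
    (hU : U ≤ e*u) (he : 2.718 ≤ e) (he2 : e ≤ 2.719) :
    (x^2+s)*(U - c) ≤ 3*((x+1)^2+s)*(u - c) := by
  have hA : (0:ℝ) ≤ x^2 + s := by positivity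
  have hq : (0:ℝ) ≤ x^2/2 + 0.2016*s := by positivity
  have h1 : (x^2+s)*(U - c) ≤ (x^2+s)*(e*u - c) := by
    apply mul_le_mul_of_nonneg_left _ hA
    linarith
  refine h1.trans ?_
  have h2 : 0 ≤ 3*((x+1)^2+s) - e*(x^2+s) := by nlinarith
  have h3 : 0 ≤ u - c - (x^2/2 + 0.2016*s) := by linarith
  have h4 : 0 ≤ (e-1)*(x^2+s)*(1-c) := by
    apply mul_nonneg (mul_nonneg (by linarith) hA); linarith
  have h5 : (e-1)*(x^2+s) ≤ (3*((x+1)^2+s) - e*(x^2+s))*(x^2/2 + 0.2016*s) := by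
    nlinarith [mul_nonneg (by linarith : (0:ℝ) ≤ 2.719 - e) (mul_nonneg hA hq),
      mul_nonneg (by linarith : (0:ℝ) ≤ 2.719 - e) hA,
      mul_nonneg (mul_nonneg (by linarith : (0:ℝ) ≤ x-1) (sq_nonneg x)) (by norm_num : (0:ℝ) ≤ 3),
      mul_nonneg hs0 (by linarith : (0:ℝ) ≤ x-1), sq_nonneg x, mul_nonneg hs0 hs0,
      mul_nonneg (sq_nonneg x) hs0]
  nlinarith [mul_nonneg h2 h3, h4, h5]

lemma regionR5 (x s c u U a : ℝ) (hx : x ≤ -2) (hs0 : 0 ≤ s) (hs : s ≤ 2.468)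
    (hc0 : 0 ≤ c) (hc1 : c ≤ 1) (h1u : 1 ≤ u) (ha : 1.5 ≤ a) (haU : a*U ≤ u) :
    (x^2+s)*(U - c) ≤ 3*((x+1)^2+s)*(u - c) := by
  have hA : (0:ℝ) ≤ x^2 + s := by positivity
  have hkey : 0 ≤ 3*a*((x+1)^2+s) - (x^2+s) := by nlinarith [sq_nonneg (x+2)]
  nlinarith [mul_nonneg hkey (by linarith : 0 ≤ u - c),
    mul_nonneg (mul_nonneg hA hc0) (by linarith : 0 ≤ a - 1), mul_nonneg hA hc0]

set_option maxHeartbeats 1000000 in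
lemma regionR2 (x s c E F e ei : ℝ)
    (hx0 : 0 ≤ x) (hx1 : x ≤ 1) (hs0 : 0 ≤ s) (hs : s ≤ 2.468)
    (hc1 : c ≤ 1 - 0.2016*s)
    (hE : |E - (1+x+x^2/2+x^3/6)| ≤ x^4*(5/96))
    (hF : |F - (1-x+x^2/2-x^3/6)| ≤ x^4*(5/96))
    (he : 2.718 ≤ e) (he2 : e ≤ 2.719) (hei : 0.3678 ≤ ei) (hei2 : ei ≤ 0.3679) :
    (x^2+s)*((e*E+ei*F)/2 - c) ≤ 3*((x+1)^2+s)*((E+F)/2 - c) := by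
  obtain ⟨hE1, hE2⟩ := abs_le.1 hE
  obtain ⟨hF1, hF2⟩ := abs_le.1 hF
  have hA : (0:ℝ) ≤ x^2 + s := by positivity
  have h1x : (0:ℝ) ≤ 1 - x := by linarith
  have hcE : 0 ≤ 3*((x+1)^2+s) - e*(x^2+s) := by nlinarith
  have hcF : 0 ≤ 3*((x+1)^2+s) - ei*(x^2+s) := by nlinarith
  have hcc : 0 ≤ 3*((x+1)^2+s) - (x^2+s) := by nlinarith
  have hElo : (0:ℝ) ≤ 1+x+x^2/2+x^3/6 - x^4*(5/96) := by
    nlinarith [sq_nonneg x, sq_nonneg (x*x)]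
  have hFlo : (0:ℝ) ≤ 1-x+x^2/2-x^3/6 - x^4*(5/96) := by
    nlinarith [sq_nonneg x, sq_nonneg (x*x), sq_nonneg (1-x)]
  have hres : 0 ≤ (3*((x+1)^2+s) - e*(x^2+s))*(1+x+x^2/2+x^3/6 - x^4*(5/96))
      + (3*((x+1)^2+s) - ei*(x^2+s))*(1-x+x^2/2-x^3/6 - x^4*(5/96))
      - 2*(3*((x+1)^2+s) - (x^2+s))*(1 - 0.2016*s) := by
    nlinarith [mul_nonneg (mul_nonneg (by linarith : (0:ℝ) ≤ 2.719 - e) hA) hElo,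
      mul_nonneg (mul_nonneg (by linarith : (0:ℝ) ≤ 0.3679 - ei) hA) hFlo,
      mul_nonneg (mul_nonneg (mul_nonneg (sq_nonneg x) hs0) hx0) h1x,
      mul_nonneg (mul_nonneg (sq_nonneg x) hs0) h1x,
      mul_nonneg (mul_nonneg (sq_nonneg (x*x)) hx0) h1x,
      mul_nonneg (sq_nonneg (x*x)) h1x,
      mul_nonneg (mul_nonneg (sq_nonneg x) hx0) h1x,
      mul_nonneg hs0 hx0, mul_nonneg (sq_nonneg x) hs0, mul_nonneg hs0 hs0]
  have hEge : 0 ≤ E - (1+x+x^2/2+x^3/6 - x^4*(5/96)) := by linarith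
  have hFge : 0 ≤ F - (1-x+x^2/2-x^3/6 - x^4*(5/96)) := by linarith
  have hcle : 0 ≤ (1 - 0.2016*s) - c := by linarith
  nlinarith [mul_nonneg hcE hEge, mul_nonneg hcF hFge, mul_nonneg hcc hcle, hres]

set_option maxHeartbeats 1000000 in
lemma regionR3b (x s c E F e ei : ℝ)
    (hx0 : -0.5 ≤ x) (hx1 : x ≤ 0) (hs0 : 0 ≤ s) (hs : s ≤ 2.468)
    (hc1 : c ≤ 1 - 0.2016*s)
    (hE : |E - (1+x+x^2/2+x^3/6)| ≤ x^4*(5/96))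
    (hF : |F - (1-x+x^2/2-x^3/6)| ≤ x^4*(5/96))
    (he : 2.718 ≤ e) (he2 : e ≤ 2.719) (hei : 0.3678 ≤ ei) (hei2 : ei ≤ 0.3679) :
    (x^2+s)*((e*E+ei*F)/2 - c) ≤ 3*((x+1)^2+s)*((E+F)/2 - c) := by
  obtain ⟨hE1, hE2⟩ := abs_le.1 hE
  obtain ⟨hF1, hF2⟩ := abs_le.1 hF
  have hA : (0:ℝ) ≤ x^2 + s := by positivity
  have hxq : (0:ℝ) ≤ 1/4 - x^2 := by nlinarith
  have h5 : (0:ℝ) ≤ x + 0.5 := by linarith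
  have hcE : 0 ≤ 3*((x+1)^2+s) - e*(x^2+s) := by
    nlinarith [mul_nonneg (by linarith : (0:ℝ) ≤ 2.719 - e) (sq_nonneg x),
      mul_nonneg (by linarith : (0:ℝ) ≤ 2.719 - e) hs0]
  have hcF : 0 ≤ 3*((x+1)^2+s) - ei*(x^2+s) := by
    nlinarith [mul_nonneg (by linarith : (0:ℝ) ≤ 0.3679 - ei) (sq_nonneg x),
      mul_nonneg (by linarith : (0:ℝ) ≤ 0.3679 - ei) hs0]
  have hcc : 0 ≤ 3*((x+1)^2+s) - (x^2+s) := by nlinarith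
  have hElo : (0:ℝ) ≤ 1+x+x^2/2+x^3/6 - x^4*(5/96) := by
    nlinarith [sq_nonneg x, sq_nonneg (x*x), sq_nonneg (1+x)]
  have hFlo : (0:ℝ) ≤ 1-x+x^2/2-x^3/6 - x^4*(5/96) := by
    nlinarith [sq_nonneg x, sq_nonneg (x*x), sq_nonneg (1-x)]
  have hres : 0 ≤ (3*((x+1)^2+s) - e*(x^2+s))*(1+x+x^2/2+x^3/6 - x^4*(5/96))
      + (3*((x+1)^2+s) - ei*(x^2+s))*(1-x+x^2/2-x^3/6 - x^4*(5/96))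
      - 2*(3*((x+1)^2+s) - (x^2+s))*(1 - 0.2016*s) := by
    nlinarith [mul_nonneg (mul_nonneg (by linarith : (0:ℝ) ≤ 2.719 - e) hA) hElo,
      mul_nonneg (mul_nonneg (by linarith : (0:ℝ) ≤ 0.3679 - ei) hA) hFlo,
      mul_nonneg (mul_nonneg (sq_nonneg x) hs0) h5,
      mul_nonneg hs0 h5,
      mul_nonneg (sq_nonneg x) h5,
      mul_nonneg (mul_nonneg (sq_nonneg x) hs0) hxq,
      mul_nonneg (sq_nonneg x) hxq,
      mul_nonneg (mul_nonneg (sq_nonneg (x*x)) hs0) h5,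
      sq_nonneg (x*x*x), mul_nonneg hs0 hs0, mul_nonneg (sq_nonneg x) hs0]
  have hEge : 0 ≤ E - (1+x+x^2/2+x^3/6 - x^4*(5/96)) := by linarith
  have hFge : 0 ≤ F - (1-x+x^2/2-x^3/6 - x^4*(5/96)) := by linarith
  have hcle : 0 ≤ (1 - 0.2016*s) - c := by linarith
  nlinarith [mul_nonneg hcE hEge, mul_nonneg hcF hFge, mul_nonneg hcc hcle, hres]

set_option maxHeartbeats 4000000 in
lemma regionR34 (z s c E F e ei : ℝ)
    (hz0 : -1 ≤ z) (hz1 : z ≤ 0.5) (hs0 : 0 ≤ s) (hs : s ≤ 2.468)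
    (hc1 : c ≤ 1 - 0.2016*s) (hc2 : 1 - s/2 ≤ c)
    (hE : |E - (1+z+z^2/2+z^3/6)| ≤ z^4*(5/96))
    (hF : |F - (1-z+z^2/2-z^3/6)| ≤ z^4*(5/96))
    (he : 2.718 ≤ e) (he2 : e ≤ 2.719) (hei : 0.3678 ≤ ei) (hei2 : ei ≤ 0.3679) :
    ((z-1)^2+s)*((E+F)/2 - c) ≤ 3*(z^2+s)*((ei*E+e*F)/2 - c) := by
  obtain ⟨hE1, hE2⟩ := abs_le.1 hE
  obtain ⟨hF1, hF2⟩ := abs_le.1 hF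
  have hA : (0:ℝ) ≤ (z-1)^2 + s := by positivity
  have hB : (0:ℝ) ≤ z^2 + s := by positivity
  have hpE : (3*(z^2+s)*ei - ((z-1)^2+s))*E
      ≥ (3*(z^2+s)*ei - ((z-1)^2+s))*(1+z+z^2/2+z^3/6)
        - (3*(z^2+s)*ei + ((z-1)^2+s))*(z^4*(5/96)) := by
    nlinarith [mul_nonneg (mul_nonneg (by linarith : (0:ℝ) ≤ ei) hB) (by linarith : 0 ≤ z^4*(5/96) - (E - (1+z+z^2/2+z^3/6))),
      mul_nonneg hA (by linarith : 0 ≤ z^4*(5/96) + (E - (1+z+z^2/2+z^3/6))),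
      mul_nonneg (mul_nonneg (by linarith : (0:ℝ) ≤ ei) hB) (by linarith : 0 ≤ z^4*(5/96) + (E - (1+z+z^2/2+z^3/6))),
      mul_nonneg hA (by linarith : 0 ≤ z^4*(5/96) - (E - (1+z+z^2/2+z^3/6)))]
  have hpF : (3*(z^2+s)*e - ((z-1)^2+s))*F
      ≥ (3*(z^2+s)*e - ((z-1)^2+s))*(1-z+z^2/2-z^3/6)
        - (3*(z^2+s)*e + ((z-1)^2+s))*(z^4*(5/96)) := by
    nlinarith [mul_nonneg (mul_nonneg (by linarith : (0:ℝ) ≤ e) hB) (by linarith : 0 ≤ z^4*(5/96) - (F - (1-z+z^2/2-z^3/6))),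
      mul_nonneg hA (by linarith : 0 ≤ z^4*(5/96) + (F - (1-z+z^2/2-z^3/6))),
      mul_nonneg (mul_nonneg (by linarith : (0:ℝ) ≤ e) hB) (by linarith : 0 ≤ z^4*(5/96) + (F - (1-z+z^2/2-z^3/6))),
      mul_nonneg hA (by linarith : 0 ≤ z^4*(5/96) - (F - (1-z+z^2/2-z^3/6)))]
  have hPm : (0:ℝ) ≤ 1-z+z^2/2-z^3/6 - z^4*(5/96) := by
    nlinarith [sq_nonneg z, sq_nonneg (z*z), sq_nonneg (1-z)]
  have hPz : (0:ℝ) ≤ 1+z+z^2/2+z^3/6 - z^4*(5/96) := by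
    nlinarith [sq_nonneg z, sq_nonneg (z*z), sq_nonneg (1+z)]
  have hres1 : 0 ≤ (3*(z^2+s)*ei - ((z-1)^2+s))*(1+z+z^2/2+z^3/6)
      + (3*(z^2+s)*e - ((z-1)^2+s))*(1-z+z^2/2-z^3/6)
      - (3*(z^2+s)*ei + ((z-1)^2+s))*(z^4*(5/96))
      - (3*(z^2+s)*e + ((z-1)^2+s))*(z^4*(5/96))
      - 2*(3*(z^2+s) - ((z-1)^2+s))*(1 - 0.2016*s) := by
    rcases le_total z 0 with hz | hz
    · have hzn : (0:ℝ) ≤ -z := by linarith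
      have h1z : (0:ℝ) ≤ 1 - z^2 := by nlinarith
      nlinarith [mul_nonneg (mul_nonneg (by linarith : (0:ℝ) ≤ e - 2.718) hB) hPm,
        mul_nonneg (mul_nonneg (by linarith : (0:ℝ) ≤ ei - 0.3678) hB) hPz,
        mul_nonneg (mul_nonneg (by linarith : (0:ℝ) ≤ 2.719 - e) hB) (mul_nonneg (sq_nonneg (z*z)) (by norm_num : (0:ℝ) ≤ 5/96)),
        mul_nonneg (mul_nonneg (by linarith : (0:ℝ) ≤ 0.3679 - ei) hB) (mul_nonneg (sq_nonneg (z*z)) (by norm_num : (0:ℝ) ≤ 5/96)),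
        mul_nonneg h1z (sq_nonneg z), mul_nonneg h1z (sq_nonneg (z*z)),
        mul_nonneg (mul_nonneg h1z hs0) (sq_nonneg z),
        mul_nonneg hzn hs0, mul_nonneg hzn (sq_nonneg z),
        mul_nonneg (mul_nonneg hzn (sq_nonneg z)) hs0,
        mul_nonneg hzn (sq_nonneg (z*z)), mul_nonneg hs0 hs0, sq_nonneg z,
        mul_nonneg (sq_nonneg z) hs0]
    · have h25 : (0:ℝ) ≤ 1/4 - z^2 := by nlinarith
      have hzh : (0:ℝ) ≤ 1/2 - z := by linarith
      nlinarith [mul_nonneg (mul_nonneg (by linarith : (0:ℝ) ≤ e - 2.718) hB) hPm,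
        mul_nonneg (mul_nonneg (by linarith : (0:ℝ) ≤ ei - 0.3678) hB) hPz,
        mul_nonneg (mul_nonneg (by linarith : (0:ℝ) ≤ 2.719 - e) hB) (mul_nonneg (sq_nonneg (z*z)) (by norm_num : (0:ℝ) ≤ 5/96)),
        mul_nonneg (mul_nonneg (by linarith : (0:ℝ) ≤ 0.3679 - ei) hB) (mul_nonneg (sq_nonneg (z*z)) (by norm_num : (0:ℝ) ≤ 5/96)),
        mul_nonneg hs0 (sq_nonneg (z - 0.84)),
        mul_nonneg (sq_nonneg z) (sq_nonneg (z - 0.87)),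
        mul_nonneg (sq_nonneg z) hzh,
        mul_nonneg h25 (sq_nonneg z),
        mul_nonneg (mul_nonneg hs0 (sq_nonneg z)) hzh,
        mul_nonneg (mul_nonneg h25 hs0) (sq_nonneg z),
        mul_nonneg (mul_nonneg hz (sq_nonneg z)) h25,
        mul_nonneg hs0 hs0, mul_nonneg (sq_nonneg z) hs0, sq_nonneg z, mul_nonneg hz hs0]
  have hres2 : 0 ≤ (3*(z^2+s)*ei - ((z-1)^2+s))*(1+z+z^2/2+z^3/6)
      + (3*(z^2+s)*e - ((z-1)^2+s))*(1-z+z^2/2-z^3/6)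
      - (3*(z^2+s)*ei + ((z-1)^2+s))*(z^4*(5/96))
      - (3*(z^2+s)*e + ((z-1)^2+s))*(z^4*(5/96))
      - 2*(3*(z^2+s) - ((z-1)^2+s))*(1 - s/2) := by
    rcases le_total z 0 with hz | hz
    · have hzn : (0:ℝ) ≤ -z := by linarith
      have h1z : (0:ℝ) ≤ 1 - z^2 := by nlinarith
      nlinarith [mul_nonneg (mul_nonneg (by linarith : (0:ℝ) ≤ e - 2.718) hB) hPm,
        mul_nonneg (mul_nonneg (by linarith : (0:ℝ) ≤ ei - 0.3678) hB) hPz,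
        mul_nonneg (mul_nonneg (by linarith : (0:ℝ) ≤ 2.719 - e) hB) (mul_nonneg (sq_nonneg (z*z)) (by norm_num : (0:ℝ) ≤ 5/96)),
        mul_nonneg (mul_nonneg (by linarith : (0:ℝ) ≤ 0.3679 - ei) hB) (mul_nonneg (sq_nonneg (z*z)) (by norm_num : (0:ℝ) ≤ 5/96)),
        mul_nonneg h1z (sq_nonneg z), mul_nonneg h1z (sq_nonneg (z*z)),
        mul_nonneg (mul_nonneg h1z hs0) (sq_nonneg z),
        mul_nonneg hzn hs0, mul_nonneg hzn (sq_nonneg z),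
        mul_nonneg (mul_nonneg hzn (sq_nonneg z)) hs0,
        mul_nonneg hzn (sq_nonneg (z*z)), mul_nonneg hs0 hs0, sq_nonneg z,
        mul_nonneg (sq_nonneg z) hs0]
    · have h25 : (0:ℝ) ≤ 1/4 - z^2 := by nlinarith
      have hzh : (0:ℝ) ≤ 1/2 - z := by linarith
      nlinarith [mul_nonneg (mul_nonneg (by linarith : (0:ℝ) ≤ e - 2.718) hB) hPm,
        mul_nonneg (mul_nonneg (by linarith : (0:ℝ) ≤ ei - 0.3678) hB) hPz,
        mul_nonneg (mul_nonneg (by linarith : (0:ℝ) ≤ 2.719 - e) hB) (mul_nonneg (sq_nonneg (z*z)) (by norm_num : (0:ℝ) ≤ 5/96)),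
        mul_nonneg (mul_nonneg (by linarith : (0:ℝ) ≤ 0.3679 - ei) hB) (mul_nonneg (sq_nonneg (z*z)) (by norm_num : (0:ℝ) ≤ 5/96)),
        mul_nonneg hs0 (sq_nonneg (z - 0.63)),
        mul_nonneg (sq_nonneg z) (sq_nonneg (z - 0.87)),
        mul_nonneg (sq_nonneg z) hzh,
        mul_nonneg h25 (sq_nonneg z),
        mul_nonneg (mul_nonneg hs0 (sq_nonneg z)) hzh,
        mul_nonneg (mul_nonneg h25 hs0) (sq_nonneg z),
        mul_nonneg (mul_nonneg hz (sq_nonneg z)) h25,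
        mul_nonneg hs0 hs0, mul_nonneg (sq_nonneg z) hs0, sq_nonneg z, mul_nonneg hz hs0]
  rcases le_total 0 (3*(z^2+s) - ((z-1)^2+s)) with h | h
  · nlinarith [hpE, hpF, mul_nonneg h (by linarith : 0 ≤ (1 - 0.2016*s) - c), hres1]
  · nlinarith [hpE, hpF, mul_nonneg (by linarith : 0 ≤ ((z-1)^2+s) - 3*(z^2+s)) (by linarith : 0 ≤ c - (1 - s/2)), hres2]

set_option maxHeartbeats 2000000 in
lemma key_real (x y : ℝ) (hy : |y| ≤ π/2) :
    (x^2+y^2)*(Real.cosh (x+1) - Real.cos y) ≤ 3*((x+1)^2+y^2)*(Real.cosh x - Real.cos y) := by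
  obtain ⟨hy1, hy2⟩ := abs_le.1 hy
  have hpi1 : π ≤ 3.1416 := by nlinarith [Real.pi_lt_d6]
  have hpi0 : 0 < π := Real.pi_pos
  have hs0 : 0 ≤ y^2 := sq_nonneg y
  have hs : y^2 ≤ 2.468 := by nlinarith
  have hc0 : 0 ≤ Real.cos y := Real.cos_nonneg_of_mem_Icc ⟨by linarith, by linarith⟩
  have hc1 : Real.cos y ≤ 1 := Real.cos_le_one y
  have hclo : 1 - y^2/2 ≤ Real.cos y := Real.one_sub_sq_div_two_le_cos
  have hchi : Real.cos y ≤ 1 - 0.2016*y^2 := by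
    have h := Real.cos_le_one_sub_mul_cos_sq (show |y| ≤ π by linarith [abs_le.2 ⟨hy1, hy2⟩])
    have hpp : 0.2016*y^2 ≤ 2/π^2*y^2 := by
      apply mul_le_mul_of_nonneg_right _ hs0
      rw [le_div_iff₀ (by positivity)]
      nlinarith
    linarith
  have he1 : 2.718 ≤ Real.exp 1 := by linarith [Real.exp_one_gt_d9]
  have he2 : Real.exp 1 ≤ 2.719 := by linarith [Real.exp_one_lt_d9]
  have heei : Real.exp (-1) * Real.exp 1 = 1 := by
    rw [← Real.exp_add]; norm_num
  have hei1 : 0.3678 ≤ Real.exp (-1) := by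
    nlinarith [heei, mul_nonneg (Real.exp_pos (-1)).le
      (by linarith [Real.exp_one_lt_d9] : (0:ℝ) ≤ 2.7182818286 - Real.exp 1)]
  have hei2 : Real.exp (-1) ≤ 0.3679 := by
    nlinarith [heei, mul_nonneg (Real.exp_pos (-1)).le
      (by linarith [Real.exp_one_gt_d9] : (0:ℝ) ≤ Real.exp 1 - 2.7182818283)]
  rcases le_or_gt 1 x with hx | hx
  · -- R1
    have hU : Real.cosh (x+1) ≤ Real.exp 1 * Real.cosh x := by
      rw [Real.cosh_eq, Real.cosh_eq]
      have h1 : Real.exp (x+1) = Real.exp x * Real.exp 1 := by rw [← Real.exp_add]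
      have h2 : Real.exp (-(x+1)) = Real.exp (-x) * Real.exp (-1) := by
        rw [← Real.exp_add, show -x + -1 = -(x+1) by ring]
      rw [h1, h2]
      nlinarith [Real.exp_pos (-x), Real.exp_pos x,
        mul_nonneg (Real.exp_pos (-x)).le
          (by linarith : (0:ℝ) ≤ Real.exp 1 - Real.exp (-1))]
    exact regionR1 x (y^2) (Real.cos y) (Real.cosh x) (Real.cosh (x+1)) (Real.exp 1)
      hx hs0 hs hc0 hc1 hchi (quad_le_cosh x) hU he1 he2
  rcases le_or_gt x (-2) with hx5 | hx5
  · -- R5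
    have ha : (1.5:ℝ) ≤ Real.cosh 1 := by
      rw [Real.cosh_eq]; nlinarith
    have haU : Real.cosh 1 * Real.cosh (x+1) ≤ Real.cosh x := by
      have h2 : Real.cosh ((x+1) - 1) = Real.cosh (x+1) * Real.cosh 1
          - Real.sinh (x+1) * Real.sinh 1 := Real.cosh_sub _ _
      rw [show x+1-1 = x by ring] at h2
      have h3 : Real.sinh (x+1) ≤ 0 := by
        rw [show (0:ℝ) = Real.sinh 0 by simp]
        exact Real.sinh_le_sinh.2 (by linarith)
      have h4 : (0:ℝ) ≤ Real.sinh 1 := by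
        rw [show (0:ℝ) = Real.sinh 0 by simp]
        exact Real.sinh_le_sinh.2 (by norm_num)
      nlinarith
    exact regionR5 x (y^2) (Real.cos y) (Real.cosh x) (Real.cosh (x+1)) (Real.cosh 1)
      hx5 hs0 hs hc0 hc1 (Real.one_le_cosh x) ha haU
  rcases le_or_gt 0 x with hx0 | hx0
  · -- R2 : 0 ≤ x < 1
    have hxabs : |x| ≤ 1 := abs_le.2 ⟨by linarith, by linarith⟩
    have h := regionR2 x (y^2) (Real.cos y) (Real.exp x) (Real.exp (-x)) (Real.exp 1)
      (Real.exp (-1)) hx0 (by linarith) hs0 hs hchi (exp_near' hxabs) (exp_near_neg' hxabs)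
      he1 he2 hei1 hei2
    have hcoshx : Real.cosh x = (Real.exp x + Real.exp (-x))/2 := Real.cosh_eq x
    have hcoshx1 : Real.cosh (x+1) = (Real.exp 1 * Real.exp x + Real.exp (-1) * Real.exp (-x))/2 := by
      rw [Real.cosh_eq]
      have e1 : Real.exp 1 * Real.exp x = Real.exp (x+1) := by
        rw [← Real.exp_add, show (1:ℝ) + x = x + 1 by ring]
      have e2 : Real.exp (-1) * Real.exp (-x) = Real.exp (-(x+1)) := by
        rw [← Real.exp_add, show (-1:ℝ) + -x = -(x+1) by ring]
      rw [e1, e2]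
    rw [hcoshx, hcoshx1]
    linarith [h]
  rcases le_or_gt (-0.5) x with hx3 | hx3
  · -- R3b : -0.5 ≤ x < 0
    have hxabs : |x| ≤ 1 := abs_le.2 ⟨by linarith, by linarith⟩
    have h := regionR3b x (y^2) (Real.cos y) (Real.exp x) (Real.exp (-x)) (Real.exp 1)
      (Real.exp (-1)) hx3 (by linarith) hs0 hs hchi (exp_near' hxabs) (exp_near_neg' hxabs)
      he1 he2 hei1 hei2
    have hcoshx : Real.cosh x = (Real.exp x + Real.exp (-x))/2 := Real.cosh_eq x
    have hcoshx1 : Real.cosh (x+1) = (Real.exp 1 * Real.exp x + Real.exp (-1) * Real.exp (-x))/2 := by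
      rw [Real.cosh_eq]
      have e1 : Real.exp 1 * Real.exp x = Real.exp (x+1) := by
        rw [← Real.exp_add, show (1:ℝ) + x = x + 1 by ring]
      have e2 : Real.exp (-1) * Real.exp (-x) = Real.exp (-(x+1)) := by
        rw [← Real.exp_add, show (-1:ℝ) + -x = -(x+1) by ring]
      rw [e1, e2]
    rw [hcoshx, hcoshx1]
    linarith [h]
  · -- R3a and R4 : -2 < x < -0.5, use z = x+1 ∈ (-1, 0.5)
    have hzabs : |x+1| ≤ 1 := abs_le.2 ⟨by linarith, by linarith⟩
    have h := regionR34 (x+1) (y^2) (Real.cos y) (Real.exp (x+1)) (Real.exp (-(x+1)))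
      (Real.exp 1) (Real.exp (-1)) (by linarith) (by linarith) hs0 hs hchi hclo
      (exp_near' hzabs) (exp_near_neg' hzabs) he1 he2 hei1 hei2
    rw [show x+1-1 = x by ring] at h
    have hcoshx1 : Real.cosh (x+1) = (Real.exp (x+1) + Real.exp (-(x+1)))/2 := Real.cosh_eq (x+1)
    have hcoshx : Real.cosh x = (Real.exp (-1) * Real.exp (x+1) + Real.exp 1 * Real.exp (-(x+1)))/2 := by
      rw [Real.cosh_eq]
      have e1 : Real.exp (-1) * Real.exp (x+1) = Real.exp x := by
        rw [← Real.exp_add, show (-1:ℝ) + (x+1) = x by ring]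
      have e2 : Real.exp 1 * Real.exp (-(x+1)) = Real.exp (-x) := by
        rw [← Real.exp_add, show (1:ℝ) + -(x+1) = -x by ring]
      rw [e1, e2]
    rw [hcoshx, hcoshx1]
    linarith [h]

lemma algebra_frac (a b d B K e : ℝ) (hd : d ≠ 0) (hB : B ≠ 0) (hK : K ≠ 0) (he : e ≠ 0) :
    (1/e)^2 * (a/(2*K*d)) * ((2*(K*e)*b)/B) = (a*b)/(e*(d*B)) := by
  field_simp

lemma abs_exp_sub_one_sq (z : ℂ) : ‖Complex.exp z - 1‖^2
    = 2*Real.exp z.re*(Real.cosh z.re - Real.cos z.im) := by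
  rw [Complex.sq_norm, Complex.normSq_apply, Complex.sub_re, Complex.sub_im,
    Complex.exp_re, Complex.exp_im, Complex.one_re, Complex.one_im, Real.cosh_eq]
  have h1 : Real.exp z.re * Real.exp (-z.re) = 1 := by rw [← Real.exp_add]; norm_num
  have h2 := Real.sin_sq_add_cos_sq z.im
  linear_combination (Real.exp z.re)^2 * h2 - h1

set_option maxHeartbeats 1000000 in
theorem eta_ratio_bound (w : ℂ) (hre : w.re ≤ 0)
    (him : |(Complex.log (1 + Complex.exp w)).im| ≤ π / 2) :
    (1 / Real.exp 1) *
      ‖(Complex.log (1 + Complex.exp w)) /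
        (Complex.exp (Complex.log (1 + Complex.exp w)) - 1)‖ *
      ‖(Complex.exp (Complex.log (1 + Complex.exp w) + 1) - 1) /
        (Complex.log (1 + Complex.exp w) + 1)‖
      ≤ (Real.exp 1 ^ 2 + Real.exp 1 + 1) / (Real.exp 1 ^ 2 + Real.exp 1) := by
  have he1 : 2.718 ≤ Real.exp 1 := by linarith [Real.exp_one_gt_d9]
  have he2 : Real.exp 1 ≤ 2.719 := by linarith [Real.exp_one_lt_d9]
  have hepos : (0:ℝ) < Real.exp 1 := Real.exp_pos 1
  by_cases h0 : 1 + Complex.exp w = 0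
  · rw [h0, Complex.log_zero]
    simp only [zero_div, map_zero, norm_zero, mul_zero, zero_mul]
    positivity
  · set η := Complex.log (1 + Complex.exp w) with hηdef
    have hexpη : Complex.exp η = 1 + Complex.exp w := Complex.exp_log h0
    have hene1 : Complex.exp η - 1 = Complex.exp w := by rw [hexpη]; ring
    have hw0 : Complex.exp w ≠ 0 := Complex.exp_ne_zero w
    by_cases hη1 : η + 1 = 0
    · rw [hη1, Complex.exp_zero]
      simp only [sub_self, zero_div, map_zero, norm_zero, mul_zero]
      positivity
    · set x := η.re with hxdef
      set y := η.im with hydef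
      have hQ1 : ‖Complex.exp η - 1‖ ^2
          = 2*Real.exp x*(Real.cosh x - Real.cos y) := abs_exp_sub_one_sq η
      have hQ2 : ‖Complex.exp (η+1) - 1‖ ^2
          = 2*Real.exp (x+1)*(Real.cosh (x+1) - Real.cos y) := by
        have h := abs_exp_sub_one_sq (η+1)
        rwa [Complex.add_re, Complex.add_im, Complex.one_re, Complex.one_im, add_zero] at h
      have hP1 : ‖η‖ ^2 = x^2+y^2 := by
        rw [Complex.sq_norm, Complex.normSq_apply]; ring
      have hP2 : ‖η+1‖ ^2 = (x+1)^2+y^2 := by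
        rw [Complex.sq_norm, Complex.normSq_apply, Complex.add_re, Complex.add_im,
          Complex.one_re, Complex.one_im]; ring
      have hQ1pos : 0 < ‖Complex.exp η - 1‖ := by
        rw [hene1]; exact norm_pos_iff.2 hw0
      have hD1 : 0 < Real.cosh x - Real.cos y := by
        by_contra hcon
        push_neg at hcon
        nlinarith [pow_pos hQ1pos 2, Real.exp_pos x,
          mul_nonneg (Real.exp_pos x).le (neg_nonneg.2 hcon)]
      have hB2 : (0:ℝ) < (x+1)^2+y^2 := by
        rw [← hP2]
        exact pow_pos (norm_pos_iff.2 hη1) 2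
      have hU0 : 0 ≤ Real.cosh (x+1) - Real.cos y :=
        by linarith [Real.one_le_cosh (x+1), Real.cos_le_one y]
      have hkey := key_real x y him
      rw [norm_div, norm_div]
      set L := (1 / Real.exp 1) * (‖η‖ / ‖Complex.exp η - 1‖) *
        (‖Complex.exp (η+1) - 1‖ / ‖η+1‖) with hLdef
      have hL0 : 0 ≤ L := by positivity
      have hC0 : (0:ℝ) < (Real.exp 1 ^ 2 + Real.exp 1 + 1) / (Real.exp 1 ^ 2 + Real.exp 1) := by
        positivity
      have hL2 : L^2 ≤ 3 / Real.exp 1 := by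
        have expand : L^2 = (1/Real.exp 1)^2 * ((x^2+y^2) / (2*Real.exp x*(Real.cosh x - Real.cos y)))
            * ((2*Real.exp (x+1)*(Real.cosh (x+1) - Real.cos y)) / ((x+1)^2+y^2)) := by
          rw [hLdef, mul_pow, mul_pow, div_pow, div_pow, div_pow, hQ1, hQ2, hP1, hP2]
        have hexp1 : Real.exp (x+1) = Real.exp x * Real.exp 1 := by rw [← Real.exp_add]
        have h3 : (1/Real.exp 1)^2 * ((x^2+y^2) / (2*Real.exp x*(Real.cosh x - Real.cos y)))
            * ((2*(Real.exp x*Real.exp 1)*(Real.cosh (x+1) - Real.cos y)) / ((x+1)^2+y^2))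
            = ((x^2+y^2)*(Real.cosh (x+1) - Real.cos y))
              / (Real.exp 1 * ((Real.cosh x - Real.cos y) * ((x+1)^2+y^2))) :=
          algebra_frac (x^2+y^2) (Real.cosh (x+1) - Real.cos y) (Real.cosh x - Real.cos y)
            ((x+1)^2+y^2) (Real.exp x) (Real.exp 1) (ne_of_gt hD1) (ne_of_gt hB2)
            (ne_of_gt (Real.exp_pos x)) (ne_of_gt hepos)
        rw [expand, hexp1, h3, div_le_div_iff₀ (by positivity) hepos]
        nlinarith [mul_le_mul_of_nonneg_right hkey hepos.le]
      have hCe : 3 / Real.exp 1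
          ≤ ((Real.exp 1 ^ 2 + Real.exp 1 + 1) / (Real.exp 1 ^ 2 + Real.exp 1))^2 := by
        rw [div_pow, div_le_div_iff₀ hepos (by positivity)]
        nlinarith [mul_nonneg (by linarith : (0:ℝ) ≤ Real.exp 1 - 2.718)
            (pow_nonneg hepos.le 3),
          mul_nonneg (by linarith : (0:ℝ) ≤ Real.exp 1 - 2.718) (sq_nonneg (Real.exp 1)),
          mul_nonneg (by linarith : (0:ℝ) ≤ Real.exp 1 - 2.718) hepos.le]
      nlinarith [hL2.trans hCe, hL0, hC0]
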